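/- If M = λ P_{S₁} − λ P_{S₂} + R with S₁ ⟂ S₂ nonzero orthogonal subspaces, R Hermitian with range orthogonal to S₁ ⊕ S₂ and ‖R‖ < λ, λ > 0, then ‖M‖ = λ, the eigenspace of M for λ is S₁ and the eigenspace for −λ is S₂. -/

import Mathlib

open scoped ComplexOrder

noncomputable def opNorm {n : Type*} [Fintype n] [DecidableEq n] (M : Matrix n n ℂ) : ℝ :=
  ‖(Matrix.toEuclideanCLM (𝕜 := ℂ) M : EuclideanSpace ℂ n →L[ℂ] EuclideanSpace ℂ n)‖

/-- `M` is minimal: its operator norm is ≤ that of `M + D` for every real diagonal `D`. -/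
def IsMinimal {n : Type*} [Fintype n] [DecidableEq n] (M : Matrix n n ℂ) : Prop :=
  ∀ d : n → ℝ, opNorm M ≤ opNorm (M + Matrix.diagonal fun i => (d i : ℂ))

/-- `P` is the orthogonal projection matrix onto the subspace `S` of `ℂⁿ`
(with respect to the standard inner product). -/
def IsOrthProjOn {n : Type*} [Fintype n] [DecidableEq n]
    (P : Matrix n n ℂ) (S : Submodule ℂ (n → ℂ)) : Prop :=
  P.IsHermitian ∧ P * P = P ∧ LinearMap.range P.mulVecLin = S

/-- Two subspaces of `ℂⁿ` are orthogonal for the standard inner product. -/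
def OrthSubspaces {n : Type*} [Fintype n]
    (S₁ S₂ : Submodule ℂ (n → ℂ)) : Prop :=
  ∀ x ∈ S₁, ∀ y ∈ S₂, dotProduct (star x) y = 0

/-- Embedding of a plain vector into Euclidean space. -/
noncomputable def eE {n : Type*} [Fintype n] (v : n → ℂ) : EuclideanSpace ℂ n :=
  (WithLp.equiv 2 (n → ℂ)).symm v

lemma toECLM_apply {n : Type*} [Fintype n] [DecidableEq n] (A : Matrix n n ℂ) (v : n → ℂ) :
    (Matrix.toEuclideanCLM (𝕜 := ℂ) A) (eE v) = eE (A.mulVec v) := rfl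

lemma mulVec_norm_le {n : Type*} [Fintype n] [DecidableEq n] (A : Matrix n n ℂ) (v : n → ℂ) :
    ‖eE (A.mulVec v)‖ ≤ opNorm A * ‖eE v‖ :=
  (Matrix.toEuclideanCLM (𝕜 := ℂ) A).le_opNorm (eE v)

lemma eE_inner {n : Type*} [Fintype n] (x y : n → ℂ) :
    (inner ℂ (eE x) (eE y) : ℂ) = dotProduct (star x) y := by
  rw [EuclideanSpace.inner_eq_star_dotProduct, dotProduct_comm]; rfl

lemma eE_zero_iff {n : Type*} [Fintype n] {v : n → ℂ} (h : eE v = 0) : v = 0 := by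
  have := congrArg (WithLp.equiv 2 (n → ℂ)) h
  simpa [eE] using this

lemma eE_smul {n : Type*} [Fintype n] (c : ℂ) (v : n → ℂ) : eE (c • v) = c • eE v :=
  rfl

lemma eE_add {n : Type*} [Fintype n] (v w : n → ℂ) : eE (v + w) = eE v + eE w :=
  rfl

lemma eE_sub {n : Type*} [Fintype n] (v w : n → ℂ) : eE (v - w) = eE v - eE w :=
  rfl

lemma sq_le_imp {p q lam : ℝ} (hlam : 0 < lam) (hp0 : 0 ≤ p) (hq0 : 0 ≤ q)
    (h : p ^ 2 ≤ lam ^ 2 * q ^ 2) : p ≤ lam * q := by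
  nlinarith [mul_nonneg hlam.le hq0]

lemma pyth2 {E : Type*} [NormedAddCommGroup E] [InnerProductSpace ℂ E]
    (x y : E) (h : (inner ℂ x y : ℂ) = 0) : ‖x + y‖ ^ 2 = ‖x‖ ^ 2 + ‖y‖ ^ 2 := by
  rw [norm_add_sq (𝕜 := ℂ), h]
  simp

theorem stmt9 {n : Type*} [Fintype n] [DecidableEq n]
    (S₁ S₂ : Submodule ℂ (n → ℂ)) (horth : OrthSubspaces S₁ S₂)
    (hS₁ : S₁ ≠ ⊥) (hS₂ : S₂ ≠ ⊥)
    (lam : ℝ) (hlam : 0 < lam)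
    (PS₁ PS₂ R : Matrix n n ℂ)
    (hPS₁ : IsOrthProjOn PS₁ S₁) (hPS₂ : IsOrthProjOn PS₂ S₂)
    (hR : R.IsHermitian) (hR₁ : PS₁ * R = 0) (hR₂ : PS₂ * R = 0)
    (hRnorm : opNorm R < lam) :
    opNorm ((lam : ℂ) • PS₁ - (lam : ℂ) • PS₂ + R) = lam ∧
    (∀ v : n → ℂ,
      ((lam : ℂ) • PS₁ - (lam : ℂ) • PS₂ + R).mulVec v = (lam : ℂ) • v ↔ v ∈ S₁) ∧
    (∀ v : n → ℂ,
      ((lam : ℂ) • PS₁ - (lam : ℂ) • PS₂ + R).mulVec v = (-(lam : ℝ) : ℂ) • v ↔ v ∈ S₂) := by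
  obtain ⟨h1h, h1i, h1r⟩ := hPS₁
  obtain ⟨h2h, h2i, h2r⟩ := hPS₂
  have hlamC : (lam : ℂ) ≠ 0 := by exact_mod_cast hlam.ne'
  have mem1 : ∀ v, PS₁.mulVec v ∈ S₁ := fun v => by
    rw [← h1r]; exact ⟨v, rfl⟩
  have mem2 : ∀ v, PS₂.mulVec v ∈ S₂ := fun v => by
    rw [← h2r]; exact ⟨v, rfl⟩
  have fix1 : ∀ v ∈ S₁, PS₁.mulVec v = v := by
    intro v hv
    rw [← h1r] at hv
    obtain ⟨u, rfl⟩ := hv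
    show PS₁.mulVec (PS₁.mulVecLin u) = PS₁.mulVecLin u
    simp only [Matrix.mulVecLin_apply, Matrix.mulVec_mulVec, h1i]
  have fix2 : ∀ v ∈ S₂, PS₂.mulVec v = v := by
    intro v hv
    rw [← h2r] at hv
    obtain ⟨u, rfl⟩ := hv
    show PS₂.mulVec (PS₂.mulVecLin u) = PS₂.mulVecLin u
    simp only [Matrix.mulVecLin_apply, Matrix.mulVec_mulVec, h2i]
  have ann21 : ∀ v ∈ S₁, PS₂.mulVec v = 0 := by
    intro v hv
    have h0 : dotProduct (star v) (PS₂.mulVec v) = 0 := horth v hv _ (mem2 v)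
    have key : dotProduct (star (PS₂.mulVec v)) (PS₂.mulVec v) = 0 := by
      rw [Matrix.star_mulVec, ← Matrix.dotProduct_mulVec, Matrix.mulVec_mulVec, h2h.eq, h2i]
      exact h0
    exact dotProduct_star_self_eq_zero.mp key
  have ann12 : ∀ v ∈ S₂, PS₁.mulVec v = 0 := by
    intro v hv
    have h0' : dotProduct (star (PS₁.mulVec v)) v = 0 := horth _ (mem1 v) v hv
    have h0 : dotProduct (star v) (PS₁.mulVec v) = 0 := by
      rw [Matrix.star_dotProduct, h0', star_zero]
    have key : dotProduct (star (PS₁.mulVec v)) (PS₁.mulVec v) = 0 := by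
      rw [Matrix.star_mulVec, ← Matrix.dotProduct_mulVec, Matrix.mulVec_mulVec, h1h.eq, h1i]
      exact h0
    exact dotProduct_star_self_eq_zero.mp key
  have RP1 : R * PS₁ = 0 := by
    have := congrArg Matrix.conjTranspose hR₁
    rwa [Matrix.conjTranspose_mul, hR.eq, h1h.eq, Matrix.conjTranspose_zero] at this
  have RP2 : R * PS₂ = 0 := by
    have := congrArg Matrix.conjTranspose hR₂
    rwa [Matrix.conjTranspose_mul, hR.eq, h2h.eq, Matrix.conjTranspose_zero] at this
  set M : Matrix n n ℂ := (lam : ℂ) • PS₁ - (lam : ℂ) • PS₂ + R with hMdef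
  have hMv : ∀ v : n → ℂ, M.mulVec v
      = (lam : ℂ) • PS₁.mulVec v - (lam : ℂ) • PS₂.mulVec v + R.mulVec v := by
    intro v
    rw [hMdef, Matrix.add_mulVec, Matrix.sub_mulVec, Matrix.smul_mulVec,
      Matrix.smul_mulVec]
  -- eigenspace for lam
  have key2 : ∀ v : n → ℂ, M.mulVec v = (lam : ℂ) • v ↔ v ∈ S₁ := by
    intro v
    constructor
    · intro h
      rw [hMv] at h
      -- apply PS₂
      have h2 := congrArg PS₂.mulVec h
      rw [Matrix.mulVec_add, Matrix.mulVec_sub, Matrix.mulVec_smul, Matrix.mulVec_smul,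
        Matrix.mulVec_smul, ann21 _ (mem1 v), Matrix.mulVec_mulVec, h2i,
        Matrix.mulVec_mulVec, hR₂, Matrix.zero_mulVec, smul_zero, zero_sub, add_zero] at h2
      -- h2 : -(lam • PS₂ v) = lam • PS₂ v
      have hb : PS₂.mulVec v = 0 := by
        have h4 : (lam : ℂ) • PS₂.mulVec v + (lam : ℂ) • PS₂.mulVec v = 0 := by
          nth_rewrite 1 [← h2]
          exact neg_add_cancel _
        rw [← add_smul] at h4
        have := smul_eq_zero.mp h4
        rcases this with h | h
        · exact absurd h (by simpa using hlamC)
        · exact h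
      set w := v - PS₁.mulVec v with hwdef
      have hRv : R.mulVec v = (lam : ℂ) • w := by
        rw [hb, smul_zero, sub_zero] at h
        rw [hwdef, smul_sub, ← h]
        abel
      have hRw : R.mulVec w = (lam : ℂ) • w := by
        rw [hwdef, Matrix.mulVec_sub, Matrix.mulVec_mulVec, RP1, Matrix.zero_mulVec,
          sub_zero, ← hwdef, hRv]
      have hw0 : w = 0 := by
        by_contra hne
        have hle : ‖eE (R.mulVec w)‖ ≤ opNorm R * ‖eE w‖ := mulVec_norm_le R w
        rw [hRw, eE_smul, norm_smul] at hle
        have hnv : 0 < ‖eE w‖ := by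
          rw [norm_pos_iff]
          exact fun hz => hne (eE_zero_iff hz)
        have hnl : ‖(lam : ℂ)‖ = lam := by
          simp [abs_of_pos hlam]
        rw [hnl] at hle
        nlinarith
      have hv1 : v = PS₁.mulVec v := by rwa [sub_eq_zero] at hw0
      rw [hv1]
      exact mem1 v
    · intro hv
      rw [hMv, fix1 v hv, ann21 v hv, smul_zero, sub_zero]
      have hRv : R.mulVec v = 0 := by
        rw [← fix1 v hv, Matrix.mulVec_mulVec, RP1, Matrix.zero_mulVec]
      rw [hRv, add_zero]
  -- eigenspace for -lam
  have key3 : ∀ v : n → ℂ, M.mulVec v = (-(lam : ℝ) : ℂ) • v ↔ v ∈ S₂ := by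
    intro v
    constructor
    · intro h
      rw [hMv] at h
      have h2 := congrArg PS₁.mulVec h
      rw [Matrix.mulVec_add, Matrix.mulVec_sub, Matrix.mulVec_smul, Matrix.mulVec_smul,
        Matrix.mulVec_smul, ann12 _ (mem2 v), Matrix.mulVec_mulVec, h1i,
        Matrix.mulVec_mulVec, hR₁, Matrix.zero_mulVec, smul_zero, sub_zero, add_zero,
        neg_smul] at h2
      -- h2 : lam • PS₁ v = -(lam • PS₁ v)
      have hb : PS₁.mulVec v = 0 := by
        have h4 : (lam : ℂ) • PS₁.mulVec v + (lam : ℂ) • PS₁.mulVec v = 0 := by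
          nth_rewrite 2 [h2]
          exact add_neg_cancel _
        rw [← add_smul] at h4
        rcases smul_eq_zero.mp h4 with h' | h'
        · exact absurd h' (by simpa using hlamC)
        · exact h'
      set w := v - PS₂.mulVec v with hwdef
      have hRv : R.mulVec v = -((lam : ℂ) • w) := by
        rw [hb, smul_zero, zero_sub, neg_smul] at h
        -- h : -(lam • PS₂ v) + R v = -(lam • v)
        have h5 : R.mulVec v = -((lam : ℂ) • v) + (lam : ℂ) • PS₂.mulVec v := by
          rw [← h]; abel
        rw [hwdef, smul_sub, h5]; abel
      have hRw : R.mulVec w = -((lam : ℂ) • w) := by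
        rw [hwdef, Matrix.mulVec_sub, Matrix.mulVec_mulVec, RP2, Matrix.zero_mulVec,
          sub_zero, ← hwdef, hRv]
      have hw0 : w = 0 := by
        by_contra hne
        have hle : ‖eE (R.mulVec w)‖ ≤ opNorm R * ‖eE w‖ := mulVec_norm_le R w
        rw [hRw] at hle
        rw [show eE (-((lam : ℂ) • w)) = -((lam : ℂ) • eE w) by
          rw [show -((lam : ℂ) • w) = (-(lam : ℂ)) • w by rw [neg_smul], eE_smul, neg_smul],
          norm_neg, norm_smul] at hle
        have hnv : 0 < ‖eE w‖ := by
          rw [norm_pos_iff]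
          exact fun hz => hne (eE_zero_iff hz)
        have hnl : ‖(lam : ℂ)‖ = lam := by simp [abs_of_pos hlam]
        rw [hnl] at hle
        nlinarith
      have hv1 : v = PS₂.mulVec v := by rwa [sub_eq_zero] at hw0
      rw [hv1]
      exact mem2 v
    · intro hv
      rw [hMv, fix2 v hv, ann12 v hv, smul_zero, zero_sub]
      have hRv : R.mulVec v = 0 := by
        rw [← fix2 v hv, Matrix.mulVec_mulVec, RP2, Matrix.zero_mulVec]
      rw [hRv, add_zero, neg_smul]

  refine ⟨?_, key2, key3⟩
  -- the norm
  have hub : opNorm M ≤ lam := by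
    show ‖(Matrix.toEuclideanCLM (𝕜 := ℂ) M : EuclideanSpace ℂ n →L[ℂ] EuclideanSpace ℂ n)‖ ≤ lam
    apply ContinuousLinearMap.opNorm_le_bound _ hlam.le
    intro x
    set v : n → ℂ := WithLp.equiv 2 (n → ℂ) x with hvdef
    have hx : x = eE v := ((WithLp.equiv 2 (n → ℂ)).symm_apply_apply x).symm
    set a := PS₁.mulVec v with hadef
    set b := PS₂.mulVec v with hbdef
    set w := v - a - b with hwdef
    have hP1w : PS₁.mulVec w = 0 := by
      rw [hwdef, Matrix.mulVec_sub, Matrix.mulVec_sub, ← hadef, fix1 a (mem1 v),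
        ann12 b (mem2 v)]
      simp
    have hP2w : PS₂.mulVec w = 0 := by
      rw [hwdef, Matrix.mulVec_sub, Matrix.mulVec_sub, ← hbdef, fix2 b (mem2 v),
        ann21 a (mem1 v)]
      simp
    set r := R.mulVec w with hrdef
    have hRv : R.mulVec v = r := by
      rw [hrdef, hwdef, Matrix.mulVec_sub, Matrix.mulVec_sub, hadef, hbdef,
        Matrix.mulVec_mulVec, Matrix.mulVec_mulVec, RP1, RP2, Matrix.zero_mulVec,
        sub_zero, sub_zero]
    have hMvv : M.mulVec v = (lam : ℂ) • a - (lam : ℂ) • b + r := by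
      rw [hMv, hRv]
    -- orthogonality relations
    have d_ab : dotProduct (star a) b = 0 := horth a (mem1 v) b (mem2 v)
    have d_aw : dotProduct (star a) w = 0 := by
      rw [hadef, Matrix.star_mulVec, h1h.eq, ← Matrix.dotProduct_mulVec, hP1w,
        dotProduct_zero]
    have d_bw : dotProduct (star b) w = 0 := by
      rw [hbdef, Matrix.star_mulVec, h2h.eq, ← Matrix.dotProduct_mulVec, hP2w,
        dotProduct_zero]
    have d_ar : dotProduct (star a) r = 0 := by
      rw [hrdef, hadef, Matrix.star_mulVec, h1h.eq, Matrix.dotProduct_mulVec,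
        Matrix.vecMul_vecMul, hR₁, Matrix.vecMul_zero, zero_dotProduct]
    have d_br : dotProduct (star b) r = 0 := by
      rw [hrdef, hbdef, Matrix.star_mulVec, h2h.eq, Matrix.dotProduct_mulVec,
        Matrix.vecMul_vecMul, hR₂, Matrix.vecMul_zero, zero_dotProduct]
    -- transfer to Euclidean space
    have e_ab : (inner ℂ (eE a) (eE b) : ℂ) = 0 := (eE_inner a b).trans d_ab
    have e_aw : (inner ℂ (eE a) (eE w) : ℂ) = 0 := (eE_inner a w).trans d_aw
    have e_bw : (inner ℂ (eE b) (eE w) : ℂ) = 0 := (eE_inner b w).trans d_bw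
    have e_ar : (inner ℂ (eE a) (eE r) : ℂ) = 0 := (eE_inner a r).trans d_ar
    have e_br : (inner ℂ (eE b) (eE r) : ℂ) = 0 := (eE_inner b r).trans d_br
    have hnl : ‖(lam : ℂ)‖ = lam := by simp [abs_of_pos hlam]
    -- ‖M v‖² = lam²‖a‖² + lam²‖b‖² + ‖r‖²
    have hsq1 : ‖eE (M.mulVec v)‖ ^ 2
        = lam ^ 2 * ‖eE a‖ ^ 2 + lam ^ 2 * ‖eE b‖ ^ 2 + ‖eE r‖ ^ 2 := by
      rw [hMvv, eE_add, eE_sub, eE_smul, eE_smul]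
      rw [pyth2 _ _ (by
        rw [inner_sub_left, inner_smul_left, inner_smul_left, e_ar, e_br]
        ring)]
      rw [sub_eq_add_neg, pyth2 _ _ (by
        rw [inner_neg_right, inner_smul_left, inner_smul_right, e_ab]
        ring)]
      rw [norm_neg, norm_smul, norm_smul, hnl]
      ring
    -- ‖v‖² = ‖a‖² + ‖b‖² + ‖w‖²
    have hvsum : v = a + b + w := by rw [hwdef]; abel
    have hsq2 : ‖eE v‖ ^ 2 = ‖eE a‖ ^ 2 + ‖eE b‖ ^ 2 + ‖eE w‖ ^ 2 := by
      rw [hvsum, eE_add, eE_add]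
      rw [pyth2 _ _ (by rw [inner_add_left, e_aw, e_bw]; ring)]
      rw [pyth2 _ _ e_ab]
    have hrb : ‖eE r‖ ≤ opNorm R * ‖eE w‖ := mulVec_norm_le R w
    have hR0 : (0:ℝ) ≤ opNorm R := norm_nonneg _
    have hrb' : ‖eE r‖ ≤ lam * ‖eE w‖ :=
      hrb.trans (mul_le_mul_of_nonneg_right hRnorm.le (norm_nonneg _))
    have hrb2 : ‖eE r‖ ^ 2 ≤ lam ^ 2 * ‖eE w‖ ^ 2 := by
      calc ‖eE r‖ ^ 2 ≤ (lam * ‖eE w‖) ^ 2 := pow_le_pow_left₀ (norm_nonneg _) hrb' 2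
        _ = lam ^ 2 * ‖eE w‖ ^ 2 := by ring
    have hfin : ‖eE (M.mulVec v)‖ ^ 2 ≤ lam ^ 2 * ‖eE v‖ ^ 2 := by
      rw [hsq1, hsq2]
      nlinarith [norm_nonneg (eE a), norm_nonneg (eE b)]
    have hxv : (Matrix.toEuclideanCLM (𝕜 := ℂ) M) x = eE (M.mulVec v) := by
      rw [hx, toECLM_apply]
    rw [hxv, hx]
    exact sq_le_imp hlam (norm_nonneg _) (norm_nonneg _) hfin
  have hlb : lam ≤ opNorm M := by
    obtain ⟨v₀, hv₀S, hv₀⟩ := (Submodule.ne_bot_iff S₁).mp hS₁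
    have heig : M.mulVec v₀ = (lam : ℂ) • v₀ := (key2 v₀).mpr hv₀S
    have hle := mulVec_norm_le M v₀
    rw [heig, eE_smul, norm_smul] at hle
    have hnv : 0 < ‖eE v₀‖ := by
      rw [norm_pos_iff]
      exact fun hz => hv₀ (eE_zero_iff hz)
    have hnl : ‖(lam : ℂ)‖ = lam := by simp [abs_of_pos hlam]
    rw [hnl] at hle
    exact le_of_mul_le_mul_right hle hnv
  exact le_antisymm hub hlb
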